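/- Let 𝒜 generate a monoid of Northcott type with exponents u_{ij} > 0. Then min Δ(ℕ𝒜) = gcd(d_1,…,d_{n-1},d_n) and max Δ(ℕ𝒜) = max(d_1,…,d_{n-1},d_n), where d_i = |u_{ni}+u_{σ(i),i} − (u_{i,σ^{-1}(i)} + u_{in})| for i = 1,…,n−1 (σ the cycle (1 2 ⋯ n−1)) and d_n = |∑_{i=1}^{n-1}u_{in} − ∑_{i=1}^{n-1}u_{ni}|, i.e., the d's are the absolute differences of the lengths of the two factorizations of each Betti element. -/
import Mathlib


/-- `σ` : the cycle `(1 2 ⋯ n−1)` in 0-based indexing on `{0,…,n-2}`. -/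
def ntSig (n i : ℕ) : ℕ := if i = n - 2 then 0 else i + 1

/-- `σ⁻¹` in 0-based indexing on `{0,…,n-2}`. -/
def ntTau (n i : ℕ) : ℕ := if i = 0 then n - 2 else i - 1

/-- The factorization homomorphism `(v_1,…,v_n) ↦ ∑ v_i • a_i`. -/
def ntDeg {G : Type*} [AddCommGroup G] (n : ℕ) (a : Fin n → G) : (Fin n → ℕ) →+ G where
  toFun v := ∑ i, v i • a i
  map_zero' := by simp
  map_add' v w := by simp [add_smul, Finset.sum_add_distrib]

/-- The defining relations of a Northcott type monoid: the two factorizations of each Betti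
element, i.e. the two sides of the binomials `f_1,…,f_{n-1}` and `D` (0-based indices). -/
def ntRel (n : ℕ) (hn : 3 ≤ n) (u : ℕ → ℕ → ℕ) (v w : Fin n → ℕ) : Prop :=
  (∃ i : Fin (n - 1),
    v = Pi.single (⟨(i : ℕ), by have := i.isLt; omega⟩ : Fin n)
          (u (n - 1) i + u (ntSig n i) i) ∧
    w = Pi.single (⟨ntTau n i, by have := i.isLt; unfold ntTau; split <;> omega⟩ : Fin n)
          (u i (ntTau n i))
        + Pi.single (⟨n - 1, by omega⟩ : Fin n) (u i (n - 1)))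
  ∨ (v = (fun j : Fin n => if (j : ℕ) < n - 1 then u (n - 1) j else 0) ∧
      w = Pi.single (⟨n - 1, by omega⟩ : Fin n) (∑ i : Fin (n - 1), u (i : ℕ) (n - 1)))

/-- Positivity of the relevant exponents `u_{ij} > 0`. -/
def ntPos (n : ℕ) (u : ℕ → ℕ → ℕ) : Prop :=
  ∀ i, i < n - 1 → 0 < u (n - 1) i ∧ 0 < u i (n - 1) ∧ 0 < u i (ntTau n i) ∧ 0 < u (ntSig n i) i

/-- The distance between two factorizations. -/
def ntDist {n : ℕ} (v w : Fin n → ℕ) : ℕ :=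
  max (∑ i, (v i - min (v i) (w i))) (∑ i, (w i - min (v i) (w i)))

/-- The set of lengths of factorizations of `s`. -/
def ntLengths {G : Type*} [AddCommGroup G] (n : ℕ) (a : Fin n → G) (s : G) : Set ℕ :=
  {l : ℕ | ∃ v : Fin n → ℕ, ntDeg n a v = s ∧ l = ∑ i, v i}

/-- The Delta set of an element: gaps between consecutive lengths of factorizations. -/
def ntDelta {G : Type*} [AddCommGroup G] (n : ℕ) (a : Fin n → G) (s : G) : Set ℕ :=
  {d : ℕ | ∃ l ∈ ntLengths n a s, ∃ l' ∈ ntLengths n a s, l < l' ∧ d = l' - l ∧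
    ∀ m ∈ ntLengths n a s, ¬ (l < m ∧ m < l')}

/-- The absolute difference of the lengths of the two factorizations of the `i`-th Betti
element, `|u_{ni}+u_{σ(i),i} − (u_{i,σ⁻¹(i)}+u_{in})|`. -/
def ntd (n : ℕ) (u : ℕ → ℕ → ℕ) (i : Fin (n - 1)) : ℕ :=
  (((u (n - 1) i + u (ntSig n i) i : ℕ) : ℤ)
    - ((u i (ntTau n i) + u i (n - 1) : ℕ) : ℤ)).natAbs

/-- `|∑ u_{in} − ∑ u_{ni}|`, the length difference for the Betti element of `D`. -/
def ntdn (n : ℕ) (u : ℕ → ℕ → ℕ) : ℕ :=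
  (((∑ i : Fin (n - 1), u (i : ℕ) (n - 1) : ℕ) : ℤ)
    - ((∑ i : Fin (n - 1), u (n - 1) i : ℕ) : ℤ)).natAbs

/-! ### Auxiliary material: chains for generated additive congruences -/

section NTChain
variable {α : Type*} [AddCommMonoid α] (R : α → α → Prop)

/-- One elementary move: add a common `t` to the two sides of a defining relation. -/
def ntStep (x y : α) : Prop := ∃ p q t, (R p q ∨ R q p) ∧ x = t + p ∧ y = t + q

/-- Chains of elementary moves. -/
def ntChain (x y : α) : Prop := Relation.ReflTransGen (ntStep R) x y

variable {R}

lemma ntStep_symm {x y : α} (h : ntStep R x y) : ntStep R y x := by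
  obtain ⟨p, q, t, h, hx, hy⟩ := h
  exact ⟨q, p, t, h.symm, hy, hx⟩

lemma ntStep_add {x y : α} (c : α) (h : ntStep R x y) : ntStep R (c + x) (c + y) := by
  obtain ⟨p, q, t, h, hx, hy⟩ := h
  exact ⟨p, q, c + t, h, by rw [hx, add_assoc], by rw [hy, add_assoc]⟩

lemma ntChain_symm {x y : α} (h : ntChain R x y) : ntChain R y x := by
  induction h with
  | refl => exact .refl
  | tail _ h2 ih => exact .trans (.single (ntStep_symm h2)) ih

lemma ntChain_add_left (c : α) {x y : α} (h : ntChain R x y) : ntChain R (c + x) (c + y) := by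
  induction h with
  | refl => exact .refl
  | tail _ h2 ih => exact .tail ih (ntStep_add c h2)

lemma ntChain_add {x y z w : α} (h : ntChain R x y) (h' : ntChain R z w) :
    ntChain R (x + z) (y + w) :=
  .trans (ntChain_add_left x h')
    (by rw [add_comm x w, add_comm y w]; exact ntChain_add_left w h)

lemma addConGen_iff_ntChain {x y : α} : addConGen R x y ↔ ntChain R x y := by
  constructor
  · intro h
    have h' : AddConGen.Rel R x y := h
    clear h
    induction h' with
    | of p q hpq => exact .single ⟨p, q, 0, Or.inl hpq, (zero_add p).symm, (zero_add q).symm⟩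
    | refl => exact .refl
    | symm _ ih => exact ntChain_symm ih
    | trans _ _ ih1 ih2 => exact .trans ih1 ih2
    | add _ _ ih1 ih2 => exact ntChain_add ih1 ih2
  · intro h
    induction h with
    | refl => exact (addConGen R).refl x
    | tail _ h2 ih =>
      obtain ⟨p, q, t, hpq, hx, hy⟩ := h2
      subst hx hy
      refine (addConGen R).trans ih ((addConGen R).add ((addConGen R).refl t) ?_)
      rcases hpq with h | h
      · exact AddConGen.Rel.of _ _ h
      · exact (addConGen R).symm (AddConGen.Rel.of _ _ h)

end NTChain

/-! ### Auxiliary material: the sides of the defining relations -/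

section NTSides
variable (n : ℕ) (u : ℕ → ℕ → ℕ)

lemma ntTau_lt {i : ℕ} (hi : i < n - 1) : ntTau n i < n - 1 := by
  unfold ntTau; split <;> omega

lemma ntSig_ntTau {i : ℕ} (hi : i < n - 1) : ntSig n (ntTau n i) = i := by
  unfold ntTau ntSig; split <;> split <;> omega

lemma ntTau_inj {i j : ℕ} (hi : i < n - 1) (hj : j < n - 1) (h : ntTau n i = ntTau n j) :
    i = j := by
  unfold ntTau at h; split at h <;> split at h <;> omega

/-- The long side of the binomial `f_i`. -/
def ntP (i : Fin (n - 1)) : Fin n → ℕ :=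
  Pi.single (⟨(i : ℕ), by have := i.isLt; omega⟩ : Fin n) (u (n - 1) i + u (ntSig n i) i)

/-- The short side of the binomial `f_i`. -/
def ntQ (i : Fin (n - 1)) : Fin n → ℕ :=
  Pi.single (⟨ntTau n i, by have := i.isLt; unfold ntTau; split <;> omega⟩ : Fin n)
      (u i (ntTau n i))
    + Pi.single (⟨n - 1, by have := i.isLt; omega⟩ : Fin n) (u i (n - 1))

/-- The first side of the binomial `D`. -/
def ntPD : Fin n → ℕ := fun j : Fin n => if (j : ℕ) < n - 1 then u (n - 1) j else 0

/-- The second side of the binomial `D`. -/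
def ntQD (hn : 3 ≤ n) : Fin n → ℕ :=
  Pi.single (⟨n - 1, by omega⟩ : Fin n) (∑ i : Fin (n - 1), u (i : ℕ) (n - 1))

lemma ntRel_iff (hn : 3 ≤ n) (v w : Fin n → ℕ) :
    ntRel n hn u v w ↔
      ((∃ i : Fin (n - 1), v = ntP n u i ∧ w = ntQ n u i) ∨
        (v = ntPD n u ∧ w = ntQD n u hn)) :=
  Iff.rfl

lemma ntP_apply (i : Fin (n - 1)) (k : Fin n) :
    ntP n u i k = if (k : ℕ) = (i : ℕ) then u (n - 1) i + u (ntSig n i) i else 0 := by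
  simp [ntP, Pi.single_apply, Fin.ext_iff]

lemma ntQ_apply (i : Fin (n - 1)) (k : Fin n) :
    ntQ n u i k = (if (k : ℕ) = ntTau n i then u i (ntTau n i) else 0)
      + (if (k : ℕ) = n - 1 then u i (n - 1) else 0) := by
  simp [ntQ, Pi.single_apply, Fin.ext_iff]

lemma ntPD_apply (k : Fin n) :
    ntPD n u k = if (k : ℕ) < n - 1 then u (n - 1) k else 0 := rfl

lemma ntQD_apply (hn : 3 ≤ n) (k : Fin n) :
    ntQD n u hn k = if (k : ℕ) = n - 1 then ∑ i : Fin (n - 1), u (i : ℕ) (n - 1) else 0 := by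
  simp [ntQD, Pi.single_apply, Fin.ext_iff]

lemma sum_single (j : Fin n) (c : ℕ) : ∑ k, Pi.single j c k = c := by
  simp [Pi.single_apply]

lemma len_ntP (i : Fin (n - 1)) : ∑ k, ntP n u i k = u (n - 1) i + u (ntSig n i) i :=
  sum_single n _ _

lemma len_ntQ (i : Fin (n - 1)) : ∑ k, ntQ n u i k = u i (ntTau n i) + u i (n - 1) := by
  simp only [ntQ, Pi.add_apply]
  rw [Finset.sum_add_distrib, sum_single, sum_single]

lemma len_ntPD (hn : 3 ≤ n) : ∑ k, ntPD n u k = ∑ i : Fin (n - 1), u (n - 1) (i : ℕ) := by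
  obtain ⟨m, rfl⟩ : ∃ m, n = m + 1 := ⟨n - 1, by omega⟩
  simp only [ntPD, Nat.add_sub_cancel]
  rw [Fin.sum_univ_castSucc]
  simp

lemma len_ntQD (hn : 3 ≤ n) : ∑ k, ntQD n u hn k = ∑ i : Fin (n - 1), u (i : ℕ) (n - 1) :=
  sum_single n _ _

lemma ntd_eq (i : Fin (n - 1)) :
    ntd n u i = (((∑ k, ntQ n u i k : ℕ) : ℤ) - ((∑ k, ntP n u i k : ℕ) : ℤ)).natAbs := by
  simp only [len_ntP, len_ntQ, ntd]
  omega

lemma ntdn_eq (hn : 3 ≤ n) :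
    ntdn n u = (((∑ k, ntQD n u hn k : ℕ) : ℤ) - ((∑ k, ntPD n u k : ℕ) : ℤ)).natAbs := by
  simp only [len_ntPD n u hn, len_ntQD, ntdn]

/-- Common trick : `t = 0` when the added part equals the whole. -/
lemma nt_t_eq_zero {m : ℕ} {x t : Fin m → ℕ} (hx : x = t + x) : t = 0 := by
  funext k
  have hc := congrFun hx k
  simp only [Pi.add_apply] at hc
  simp only [Pi.zero_apply]
  omega

variable {n u} (hn : 3 ≤ n) (hu : ntPos n u)
include hn hu

lemma ntQD_pos : 0 < ∑ i : Fin (n - 1), u (i : ℕ) (n - 1) :=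
  Finset.sum_pos (fun k _ => (hu k k.isLt).2.1) ⟨⟨0, by omega⟩, Finset.mem_univ _⟩

lemma ntQD_big (i : Fin (n - 1)) : u i (n - 1) < ∑ k : Fin (n - 1), u (k : ℕ) (n - 1) := by
  have hi := i.isLt
  obtain ⟨j, hj⟩ : ∃ j : Fin (n - 1), j ≠ i := by
    by_cases h0 : (i : ℕ) = 0
    · refine ⟨⟨1, by omega⟩, fun hc => ?_⟩
      rw [Fin.ext_iff] at hc
      simp only [Fin.val_mk] at hc
      omega
    · refine ⟨⟨0, by omega⟩, fun hc => ?_⟩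
      rw [Fin.ext_iff] at hc
      simp only [Fin.val_mk] at hc
      omega
  exact Finset.single_lt_sum (f := fun k : Fin (n - 1) => u (k : ℕ) (n - 1)) hj
    (Finset.mem_univ i) (Finset.mem_univ j) ((hu j j.isLt).2.1) (fun k _ _ => Nat.zero_le _)

/-- The only move out of `ntP i` leads to `ntQ i`. -/
lemma ntStep_from_P (i : Fin (n - 1)) {y : Fin n → ℕ}
    (h : ntStep (ntRel n hn u) (ntP n u i) y) : y = ntQ n u i := by
  have hi := i.isLt
  obtain ⟨p, q, t, hpq, hx, hy⟩ := h
  rcases hpq with hR | hR <;> rw [ntRel_iff n u hn] at hR <;>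
    rcases hR with ⟨j, hp, hq⟩ | ⟨hp, hq⟩
  · -- forward, binomial j
    subst hp hq
    have hj := j.isLt
    have hji : (j : ℕ) = (i : ℕ) := by
      by_contra hne
      have hc := congrFun hx ⟨j, by omega⟩
      have hpos := (hu j hj).1
      simp only [Pi.add_apply, ntP_apply, Fin.val_mk, hne, if_false, if_true,
        eq_self_iff_true] at hc
      omega
    have hj' : j = i := Fin.ext hji
    subst hj'
    have ht := nt_t_eq_zero hx
    rw [hy, ht, zero_add]
  · -- forward, binomial D: impossible
    exfalso
    subst hp hq
    have he1 : (if (i : ℕ) = 0 then 1 else 0) < n - 1 := by split <;> omega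
    have he2 : ¬ ((if (i : ℕ) = 0 then 1 else 0) = (i : ℕ)) := by split <;> omega
    have hc := congrFun hx ⟨if (i : ℕ) = 0 then 1 else 0, by omega⟩
    have hpos := (hu _ he1).1
    simp only [Pi.add_apply, ntP_apply, ntPD_apply, Fin.val_mk, he1, he2, if_false, if_true,
      eq_self_iff_true] at hc
    omega
  · -- backward, binomial j: impossible
    exfalso
    subst hq hp
    have hj := j.isLt
    have hc := congrFun hx ⟨n - 1, by omega⟩
    have hpos := (hu j hj).2.1
    have htj := ntTau_lt n hj
    have hc1 : ¬ (n - 1 = (i : ℕ)) := by omega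
    have hc2 : ¬ (n - 1 = ntTau n (j : ℕ)) := by omega
    simp only [Pi.add_apply, ntP_apply, ntQ_apply, Fin.val_mk, hc1, hc2, if_false, if_true,
      eq_self_iff_true] at hc
    omega
  · -- backward, binomial D: impossible
    exfalso
    subst hq hp
    have hc := congrFun hx ⟨n - 1, by omega⟩
    have hpos := ntQD_pos hn hu
    have hc1 : ¬ (n - 1 = (i : ℕ)) := by omega
    simp only [Pi.add_apply, ntP_apply, ntQD_apply, Fin.val_mk, hc1, if_false, if_true,
      eq_self_iff_true] at hc
    omega

/-- The only move out of `ntQ i` leads to `ntP i`. -/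
lemma ntStep_from_Q (i : Fin (n - 1)) {y : Fin n → ℕ}
    (h : ntStep (ntRel n hn u) (ntQ n u i) y) : y = ntP n u i := by
  have hi := i.isLt
  have hti := ntTau_lt n hi
  obtain ⟨p, q, t, hpq, hx, hy⟩ := h
  rcases hpq with hR | hR <;> rw [ntRel_iff n u hn] at hR <;>
    rcases hR with ⟨j, hp, hq⟩ | ⟨hp, hq⟩
  · -- forward, binomial j: impossible
    exfalso
    subst hp hq
    have hj := j.isLt
    have hc := congrFun hx ⟨j, by omega⟩
    have hc1 : ¬ ((j : ℕ) = n - 1) := by omega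
    by_cases hji : (j : ℕ) = ntTau n i
    · have hc' := congrFun hx ⟨j, by omega⟩
      have hsig : ntSig n (ntTau n (i : ℕ)) = (i : ℕ) := ntSig_ntTau n hi
      have hc2 : ¬ (ntTau n (i : ℕ) = n - 1) := by omega
      have hpos := (hu (ntTau n i) hti).1
      have hpos2 := (hu i hi).2.2.1
      simp only [Pi.add_apply, ntP_apply, ntQ_apply, Fin.val_mk, hc1, hji, hsig, hc2, if_false,
        if_true, eq_self_iff_true] at hc'
      omega
    · have hpos := (hu j hj).1
      simp only [Pi.add_apply, ntP_apply, ntQ_apply, Fin.val_mk, hc1, hji, if_false, if_true,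
        eq_self_iff_true] at hc
      omega
  · -- forward, binomial D: impossible
    exfalso
    subst hp hq
    have he1 : (if ntTau n (i : ℕ) = 0 then 1 else 0) < n - 1 := by split <;> omega
    have he2 : ¬ ((if ntTau n (i : ℕ) = 0 then 1 else 0) = ntTau n (i : ℕ)) := by
      split <;> omega
    have he3 : ¬ ((if ntTau n (i : ℕ) = 0 then 1 else 0) = n - 1) := by split <;> omega
    have hc := congrFun hx ⟨if ntTau n (i : ℕ) = 0 then 1 else 0, by omega⟩
    have hpos := (hu _ he1).1
    simp only [Pi.add_apply, ntQ_apply, ntPD_apply, Fin.val_mk, he1, he2, he3, if_false,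
      if_true, eq_self_iff_true] at hc
    omega
  · -- backward, binomial j
    subst hp hq
    have hj := j.isLt
    have htj := ntTau_lt n hj
    have hji : ntTau n (j : ℕ) = ntTau n (i : ℕ) := by
      by_contra hne
      have hc := congrFun hx ⟨ntTau n j, by omega⟩
      have hpos := (hu j hj).2.2.1
      have hc1 : ¬ (ntTau n (j : ℕ) = n - 1) := by omega
      simp only [Pi.add_apply, ntQ_apply, Fin.val_mk, hne, hc1, if_false, if_true,
        eq_self_iff_true] at hc
      omega
    have hj' : j = i := Fin.ext (ntTau_inj n hj hi hji)
    subst hj'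
    have ht := nt_t_eq_zero hx
    rw [hy, ht, zero_add]
  · -- backward, binomial D: impossible
    exfalso
    subst hp hq
    have hc := congrFun hx ⟨n - 1, by omega⟩
    have hbig := ntQD_big hn hu i
    have hc1 : ¬ (n - 1 = ntTau n (i : ℕ)) := by omega
    simp only [Pi.add_apply, ntQ_apply, ntQD_apply, Fin.val_mk, hc1, if_false, if_true,
      eq_self_iff_true] at hc
    omega

/-- The only move out of `ntPD` leads to `ntQD`. -/
lemma ntStep_from_PD {y : Fin n → ℕ}
    (h : ntStep (ntRel n hn u) (ntPD n u) y) : y = ntQD n u hn := by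
  obtain ⟨p, q, t, hpq, hx, hy⟩ := h
  rcases hpq with hR | hR <;> rw [ntRel_iff n u hn] at hR <;>
    rcases hR with ⟨j, hp, hq⟩ | ⟨hp, hq⟩
  · -- forward, binomial j: impossible
    exfalso
    subst hp hq
    have hj := j.isLt
    have hc := congrFun hx ⟨j, by omega⟩
    have hpos := (hu j hj).2.2.2
    have hc1 : (j : ℕ) < n - 1 := hj
    simp only [Pi.add_apply, ntP_apply, ntPD_apply, Fin.val_mk, hc1, if_false, if_true,
      eq_self_iff_true] at hc
    omega
  · -- forward, binomial D
    subst hp hq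
    have ht := nt_t_eq_zero hx
    rw [hy, ht, zero_add]
  · -- backward, binomial j: impossible
    exfalso
    subst hp hq
    have hj := j.isLt
    have htj := ntTau_lt n hj
    have hc := congrFun hx ⟨n - 1, by omega⟩
    have hpos := (hu j hj).2.1
    have hc1 : ¬ (n - 1 < n - 1) := by omega
    have hc2 : ¬ (n - 1 = ntTau n (j : ℕ)) := by omega
    simp only [Pi.add_apply, ntQ_apply, ntPD_apply, Fin.val_mk, hc1, hc2, if_false, if_true,
      eq_self_iff_true] at hc
    omega
  · -- backward, binomial D: impossible
    exfalso
    subst hp hq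
    have hc := congrFun hx ⟨n - 1, by omega⟩
    have hpos := ntQD_pos hn hu
    have hc1 : ¬ (n - 1 < n - 1) := by omega
    simp only [Pi.add_apply, ntQD_apply, ntPD_apply, Fin.val_mk, hc1, if_false, if_true,
      eq_self_iff_true] at hc
    omega

/-- The only move out of `ntQD` leads to `ntPD`. -/
lemma ntStep_from_QD {y : Fin n → ℕ}
    (h : ntStep (ntRel n hn u) (ntQD n u hn) y) : y = ntPD n u := by
  obtain ⟨p, q, t, hpq, hx, hy⟩ := h
  rcases hpq with hR | hR <;> rw [ntRel_iff n u hn] at hR <;>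
    rcases hR with ⟨j, hp, hq⟩ | ⟨hp, hq⟩
  · -- forward, binomial j: impossible
    exfalso
    subst hp hq
    have hj := j.isLt
    have hc := congrFun hx ⟨j, by omega⟩
    have hpos := (hu j hj).1
    have hc1 : ¬ ((j : ℕ) = n - 1) := by omega
    simp only [Pi.add_apply, ntP_apply, ntQD_apply, Fin.val_mk, hc1, if_false, if_true,
      eq_self_iff_true] at hc
    omega
  · -- forward, binomial D: impossible
    exfalso
    subst hp hq
    have hc := congrFun hx ⟨0, by omega⟩
    have hpos := (hu 0 (by omega)).1
    have hc1 : ¬ ((0 : ℕ) = n - 1) := by omega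
    have hc2 : (0 : ℕ) < n - 1 := by omega
    simp only [Pi.add_apply, ntPD_apply, ntQD_apply, Fin.val_mk, hc1, hc2, if_false, if_true,
      eq_self_iff_true] at hc
    omega
  · -- backward, binomial j: impossible
    exfalso
    subst hp hq
    have hj := j.isLt
    have htj := ntTau_lt n hj
    have hc := congrFun hx ⟨ntTau n j, by omega⟩
    have hpos := (hu j hj).2.2.1
    have hc1 : ¬ (ntTau n (j : ℕ) = n - 1) := by omega
    simp only [Pi.add_apply, ntQ_apply, ntQD_apply, Fin.val_mk, hc1, if_false, if_true,
      eq_self_iff_true] at hc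
    omega
  · -- backward, binomial D
    subst hp hq
    have ht := nt_t_eq_zero hx
    rw [hy, ht, zero_add]

lemma ntChain_from_P (i : Fin (n - 1)) {v : Fin n → ℕ}
    (h : ntChain (ntRel n hn u) (ntP n u i) v) : v = ntP n u i ∨ v = ntQ n u i := by
  induction h with
  | refl => exact Or.inl rfl
  | tail _ h2 ih =>
    rcases ih with rfl | rfl
    · exact Or.inr (ntStep_from_P hn hu i h2)
    · exact Or.inl (ntStep_from_Q hn hu i h2)

lemma ntChain_from_PD {v : Fin n → ℕ}
    (h : ntChain (ntRel n hn u) (ntPD n u) v) : v = ntPD n u ∨ v = ntQD n u hn := by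
  induction h with
  | refl => exact Or.inl rfl
  | tail _ h2 ih =>
    rcases ih with rfl | rfl
    · exact Or.inr (ntStep_from_PD hn hu h2)
    · exact Or.inl (ntStep_from_QD hn hu h2)

end NTSides

/-- for a monoid of Northcott type, `min Δ(ℕ𝒜) = gcd(d_1,…,d_n)` and
`max Δ(ℕ𝒜) = max(d_1,…,d_n)`, where the `d`'s are the absolute differences of the lengths of
the two factorizations of each Betti element (assumed not all zero). -/
theorem northcott_delta_set {G : Type*} [AddCommGroup G] (n : ℕ) (hn : 3 ≤ n)
    (u : ℕ → ℕ → ℕ) (hu : ntPos n u) (a : Fin n → G)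
    (hker : AddCon.ker (ntDeg n a) = addConGen (ntRel n hn u))
    (hnz : (∃ i : Fin (n - 1), ntd n u i ≠ 0) ∨ ntdn n u ≠ 0) :
    IsLeast {d : ℕ | ∃ s : G, d ∈ ntDelta n a s}
        (Nat.gcd (Finset.univ.gcd (ntd n u)) (ntdn n u)) ∧
    IsGreatest {d : ℕ | ∃ s : G, d ∈ ntDelta n a s}
        (max (Finset.univ.sup (ntd n u)) (ntdn n u)) := by
  set R := ntRel n hn u with hR
  set g := Nat.gcd (Finset.univ.gcd (ntd n u)) (ntdn n u) with hg
  set M := max (Finset.univ.sup (ntd n u)) (ntdn n u) with hM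
  -- the kernel is the chain relation
  have hker' : ∀ v w : Fin n → ℕ, ntDeg n a v = ntDeg n a w ↔ ntChain R v w := by
    intro v w
    rw [← AddCon.ker_rel (ntDeg n a), hker]
    exact addConGen_iff_ntChain
  have hRdeg : ∀ p q : Fin n → ℕ, R p q → ntDeg n a p = ntDeg n a q := by
    intro p q h
    rw [hker' p q]
    exact .single ⟨p, q, 0, Or.inl h, (zero_add p).symm, (zero_add q).symm⟩
  have hstep_deg : ∀ x y : Fin n → ℕ, ntStep R x y → ntDeg n a x = ntDeg n a y := by
    rintro x y ⟨p, q, t, hpq, rfl, rfl⟩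
    rcases hpq with h | h
    · rw [map_add, map_add, hRdeg p q h]
    · rw [map_add, map_add, hRdeg q p h]
  -- length change of one step
  have hstep_diff : ∀ x y : Fin n → ℕ, ntStep R x y →
      (∃ i : Fin (n - 1), (((∑ k, y k : ℕ) : ℤ) - ((∑ k, x k : ℕ) : ℤ)).natAbs = ntd n u i) ∨
        (((∑ k, y k : ℕ) : ℤ) - ((∑ k, x k : ℕ) : ℤ)).natAbs = ntdn n u := by
    rintro x y ⟨p, q, t, hpq, rfl, rfl⟩
    have hsum : ((∑ k, (t + q) k : ℕ) : ℤ) - ((∑ k, (t + p) k : ℕ) : ℤ)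
        = ((∑ k, q k : ℕ) : ℤ) - ((∑ k, p k : ℕ) : ℤ) := by
      simp only [Pi.add_apply]
      rw [Finset.sum_add_distrib, Finset.sum_add_distrib]
      push_cast
      ring
    rw [hsum]
    have key : ∀ p' q' : Fin n → ℕ, R p' q' →
        (∃ i : Fin (n - 1), (((∑ k, q' k : ℕ) : ℤ) - ((∑ k, p' k : ℕ) : ℤ)).natAbs = ntd n u i) ∨
          (((∑ k, q' k : ℕ) : ℤ) - ((∑ k, p' k : ℕ) : ℤ)).natAbs = ntdn n u := by
      intro p' q' h
      rw [hR] at h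
      rw [ntRel_iff n u hn] at h
      rcases h with ⟨i, rfl, rfl⟩ | ⟨rfl, rfl⟩
      · exact Or.inl ⟨i, (ntd_eq n u i).symm⟩
      · exact Or.inr (ntdn_eq n u hn).symm
    rcases hpq with h | h
    · exact key p q h
    · rcases key q p h with ⟨i, hi⟩ | hD
      · exact Or.inl ⟨i, by rw [← hi, ← Int.natAbs_neg]; congr 1; ring⟩
      · exact Or.inr (by rw [← hD, ← Int.natAbs_neg]; congr 1; ring)
  -- g divides every length difference along a chain
  have hgd : ∀ i : Fin (n - 1), g ∣ ntd n u i :=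
    fun i => (Nat.gcd_dvd_left _ _).trans (Finset.gcd_dvd (Finset.mem_univ i))
  have hgdn : g ∣ ntdn n u := Nat.gcd_dvd_right _ _
  have hchain_dvd : ∀ x y : Fin n → ℕ, ntChain R x y →
      (g : ℤ) ∣ ((∑ k, y k : ℕ) : ℤ) - ((∑ k, x k : ℕ) : ℤ) := by
    intro x y h
    induction h with
    | refl => simp
    | @tail b c _ h2 ih =>
      have hs : (g : ℤ) ∣ ((∑ k, c k : ℕ) : ℤ) - ((∑ k, b k : ℕ) : ℤ) := by
        rcases hstep_diff b c h2 with ⟨i, hi⟩ | hD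
        · refine Int.dvd_natAbs.mp ?_
          rw [hi]
          exact_mod_cast Int.natCast_dvd_natCast.mpr (hgd i)
        · refine Int.dvd_natAbs.mp ?_
          rw [hD]
          exact_mod_cast Int.natCast_dvd_natCast.mpr hgdn
      have : ((∑ k, c k : ℕ) : ℤ) - ((∑ k, x k : ℕ) : ℤ) = (((∑ k, b k : ℕ) : ℤ) - ((∑ k, x k : ℕ) : ℤ))
          + (((∑ k, c k : ℕ) : ℤ) - ((∑ k, b k : ℕ) : ℤ)) := by ring
      rw [this]
      exact dvd_add ih hs
  -- every step changes the length by at most M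
  have hstep_bound : ∀ x y : Fin n → ℕ, ntStep R x y →
      (((∑ k, y k : ℕ) : ℤ) - ((∑ k, x k : ℕ) : ℤ)).natAbs ≤ M := by
    intro x y h
    rcases hstep_diff x y h with ⟨i, hi⟩ | hD
    · rw [hi]
      exact le_trans (Finset.le_sup (Finset.mem_univ i)) (le_max_left _ _)
    · rw [hD]
      exact le_max_right _ _
  have hg_pos : 0 < g := by
    rcases Nat.eq_zero_or_pos g with h0 | h
    · exfalso
      rw [hg, Nat.gcd_eq_zero_iff] at h0
      rcases hnz with ⟨i, hi⟩ | hD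
      · exact hi (Finset.gcd_eq_zero_iff.mp h0.1 i (Finset.mem_univ i))
      · exact hD h0.2
    · exact h
  -- the subgroup of ℤ of length differences between factorizations of equal degree
  have exists_g_pair : ∃ v w : Fin n → ℕ, ntDeg n a v = ntDeg n a w ∧
      (g : ℤ) = ((∑ k, w k : ℕ) : ℤ) - ((∑ k, v k : ℕ) : ℤ) := by
    set T : AddSubgroup ℤ :=
      { carrier := {e : ℤ | ∃ v w : Fin n → ℕ, ntDeg n a v = ntDeg n a w ∧
          e = ((∑ k, w k : ℕ) : ℤ) - ((∑ k, v k : ℕ) : ℤ)}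
        zero_mem' := ⟨0, 0, rfl, by simp⟩
        add_mem' := by
          rintro x y ⟨v, w, h1, rfl⟩ ⟨v', w', h2, rfl⟩
          refine ⟨v + v', w + w', by rw [map_add, map_add, h1, h2], ?_⟩
          simp only [Pi.add_apply]
          rw [Finset.sum_add_distrib, Finset.sum_add_distrib]
          push_cast
          ring
        neg_mem' := by
          rintro x ⟨v, w, h1, rfl⟩
          exact ⟨w, v, h1.symm, by ring⟩ } with hT
    obtain ⟨b, hb⟩ := Int.subgroup_cyclic T
    have hmemT : ∀ e : ℤ, e ∈ T ↔ ∃ v w : Fin n → ℕ, ntDeg n a v = ntDeg n a w ∧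
        e = ((∑ k, w k : ℕ) : ℤ) - ((∑ k, v k : ℕ) : ℤ) := fun e => Iff.rfl
    have hbdvd : ∀ e ∈ T, b ∣ e := by
      intro e he
      rw [hb, AddSubgroup.mem_closure_singleton] at he
      obtain ⟨k, hk⟩ := he
      exact ⟨k, by rw [← hk, smul_eq_mul, mul_comm]⟩
    have hbT : b ∈ T := by
      rw [hb]
      exact AddSubgroup.subset_closure rfl
    -- b.natAbs divides each d
    have hPQ : ∀ i : Fin (n - 1),
        (((∑ k, ntQ n u i k : ℕ) : ℤ) - ((∑ k, ntP n u i k : ℕ) : ℤ)) ∈ T :=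
      fun i => ⟨ntP n u i, ntQ n u i, hRdeg _ _ ((ntRel_iff n u hn _ _).mpr
        (Or.inl ⟨i, rfl, rfl⟩)), rfl⟩
    have hDT : (((∑ k, ntQD n u hn k : ℕ) : ℤ) - ((∑ k, ntPD n u k : ℕ) : ℤ)) ∈ T :=
      ⟨ntPD n u, ntQD n u hn, hRdeg _ _ ((ntRel_iff n u hn _ _).mpr (Or.inr ⟨rfl, rfl⟩)), rfl⟩
    have hbg : b.natAbs ∣ g := by
      refine Nat.dvd_gcd (Finset.dvd_gcd fun i _ => ?_) ?_
      · rw [ntd_eq]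
        exact Int.natAbs_dvd_natAbs.mpr (hbdvd _ (hPQ i))
      · rw [ntdn_eq n u hn]
        exact Int.natAbs_dvd_natAbs.mpr (hbdvd _ hDT)
    have hgb : g ∣ b.natAbs := by
      obtain ⟨v, w, hdeg, he⟩ := hbT
      have := hchain_dvd v w ((hker' v w).mp hdeg)
      rw [← he] at this
      have h2 : ((g : ℤ)).natAbs ∣ b.natAbs := Int.natAbs_dvd_natAbs.mpr this
      simpa using h2
    have hbg' : b.natAbs = g := Nat.dvd_antisymm hbg hgb
    have hgT : (g : ℤ) ∈ T := by
      rcases Int.natAbs_eq b with h | h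
      · rw [← hbg', ← h]; exact hbT
      · rw [← hbg']
        have h2 : ((b.natAbs : ℤ)) = -b := by omega
        rw [h2]
        exact T.neg_mem hbT
    obtain ⟨v, w, hdeg, he⟩ := hgT
    exact ⟨v, w, hdeg, he⟩
  constructor
  · -- IsLeast
    constructor
    · -- membership
      obtain ⟨v, w, hdeg, he⟩ := exists_g_pair
      have hlen : ∑ k, w k = ∑ k, v k + g := by omega
      refine ⟨ntDeg n a v, ∑ k, v k, ⟨v, rfl, rfl⟩, ∑ k, w k, ⟨w, hdeg.symm, rfl⟩, ?_, ?_, ?_⟩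
      · omega
      · omega
      · rintro m ⟨x, hx, rfl⟩ ⟨h1, h2⟩
        have hch : ntChain R v x := (hker' v x).mp (hx.symm)
        have hd := hchain_dvd v x hch
        have := Int.le_of_dvd (by omega) hd
        omega
    · -- lower bound
      rintro d ⟨s, l, ⟨v, hv, rfl⟩, l', ⟨w, hw, rfl⟩, hlt, rfl, -⟩
      have hch : ntChain R v w := (hker' v w).mp (hv.trans hw.symm)
      have hd := hchain_dvd v w hch
      have := Int.le_of_dvd (by omega) hd
      omega
  · -- IsGreatest
    constructor
    · -- membership : the Betti element realizing the maximum
      have main : ∀ p q : Fin n → ℕ, R p q →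
          (∀ x : Fin n → ℕ, ntChain R p x → x = p ∨ x = q) →
          (((∑ k, q k : ℕ) : ℤ) - ((∑ k, p k : ℕ) : ℤ)).natAbs = M →
          M ∈ {d : ℕ | ∃ s : G, d ∈ ntDelta n a s} := by
        intro p q hpq hclass habs
        have hM_pos : 0 < M := by
          rcases Nat.eq_zero_or_pos M with h0 | h
          · exfalso
            rcases hnz with ⟨i, hi⟩ | hD
            · have : ntd n u i ≤ M :=
                le_trans (Finset.le_sup (Finset.mem_univ i)) (le_max_left _ _)
              omega
            · have : ntdn n u ≤ M := le_max_right _ _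
              omega
          · exact h
        set lp := ∑ k, p k with hlp
        set lq := ∑ k, q k with hlq
        have hdeg : ntDeg n a p = ntDeg n a q := hRdeg p q hpq
        have hlen_mem : ∀ m, m ∈ ntLengths n a (ntDeg n a p) → m = lp ∨ m = lq := by
          rintro m ⟨x, hx, rfl⟩
          rcases hclass x ((hker' p x).mp hx.symm) with rfl | rfl
          · exact Or.inl rfl
          · exact Or.inr rfl
        have hne : lp ≠ lq := by
          intro h
          rw [hlp, hlq] at h
          omega
        refine ⟨ntDeg n a p, min lp lq, ?_, max lp lq, ?_, ?_, ?_, ?_⟩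
        · rcases le_total lp lq with h | h
          · rw [min_eq_left h]; exact ⟨p, rfl, rfl⟩
          · rw [min_eq_right h]; exact ⟨q, hdeg.symm, rfl⟩
        · rcases le_total lp lq with h | h
          · rw [max_eq_right h]; exact ⟨q, hdeg.symm, rfl⟩
          · rw [max_eq_left h]; exact ⟨p, rfl, rfl⟩
        · omega
        · omega
        · rintro m hm ⟨h1, h2⟩
          rcases hlen_mem m hm with rfl | rfl <;> omega
      rcases le_or_gt (Finset.univ.sup (ntd n u)) (ntdn n u) with hcase | hcase
      · -- M = ntdn, realized by the relation D
        have hMD : M = ntdn n u := max_eq_right hcase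
        refine main (ntPD n u) (ntQD n u hn) ((ntRel_iff n u hn _ _).mpr (Or.inr ⟨rfl, rfl⟩))
          ?_ ?_
        · exact fun x hx => ntChain_from_PD hn hu hx
        · rw [← ntdn_eq n u hn, hMD]
      · -- M = sup, realized by some binomial
        have hne : (Finset.univ : Finset (Fin (n - 1))).Nonempty :=
          ⟨⟨0, by omega⟩, Finset.mem_univ _⟩
        obtain ⟨i, -, hi⟩ := Finset.exists_mem_eq_sup Finset.univ hne (ntd n u)
        have hMi : M = ntd n u i := by
          rw [hM, max_eq_left (le_of_lt hcase), hi]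
        refine main (ntP n u i) (ntQ n u i)
          ((ntRel_iff n u hn _ _).mpr (Or.inl ⟨i, rfl, rfl⟩)) ?_ ?_
        · exact fun x hx => ntChain_from_P hn hu i hx
        · rw [← ntd_eq, hMi]
    · -- upper bound
      rintro d ⟨s, l, ⟨v, hv, rfl⟩, l', ⟨w, hw, rfl⟩, hlt, rfl, hbet⟩
      have hch : ntChain R v w := (hker' v w).mp (hv.trans hw.symm)
      have key : ∀ x : Fin n → ℕ, ntChain R x w → ntDeg n a x = s → ∑ k, x k ≤ ∑ k, v k →
          ∑ k, w k - ∑ k, v k ≤ M := by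
        intro x hx
        induction hx using Relation.ReflTransGen.head_induction_on with
        | refl => intro _ h; omega
        | @head x c hstep hchain ih =>
          intro hdx hxle
          have hdc : ntDeg n a c = s := (hstep_deg x c hstep).symm.trans hdx
          have hcl : ∑ k, c k ∈ ntLengths n a s := ⟨c, hdc, rfl⟩
          have hnb := hbet _ hcl
          have hcb : ∑ k, c k ≤ ∑ k, v k ∨ ∑ k, w k ≤ ∑ k, c k := by omega
          rcases hcb with h | h
          · exact ih hdc h
          · have := hstep_bound x c hstep
            omega
      exact key v hch hv le_rfl
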